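/- Let K be a random variable on a finite alphabet 𝒦 with |𝒦| ≥ 3 satisfying (1/n)log|𝒦| ≤ c and |(1/n)H(K) − (1/n)log|𝒦|| ≤ β. Then for sufficiently large n, Var[(1/n)log(1/P_K(K))] ≤ β + 2βc + β². -/

import Mathlib

open Finset


lemma log_le_div_e {x : ℝ} (hx : 0 < x) : Real.log x ≤ x / Real.exp 1 := by
  have h := Real.log_le_sub_one_of_pos (div_pos hx (Real.exp_pos 1))
  rw [Real.log_div hx.ne' (Real.exp_ne_zero 1), Real.log_exp] at h
  linarith

lemma neg_inv_e_le_mul_log {q : ℝ} (hq : 0 < q) : -(1 / Real.exp 1) ≤ q * Real.log q := by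
  have h := log_le_div_e (inv_pos.2 hq)
  rw [Real.log_inv] at h
  have := mul_le_mul_of_nonneg_left h hq.le
  have hq' : q * (q⁻¹ / Real.exp 1) = 1 / Real.exp 1 := by
    field_simp
  nlinarith [Real.exp_pos 1]

lemma mul_sq_log_le {q : ℝ} (hq : 0 < q) (hq1 : q ≤ 1) :
    q * (Real.log q) ^ 2 ≤ 4 / Real.exp 1 ^ 2 := by
  have hs : 0 < Real.sqrt q := Real.sqrt_pos.2 hq
  have hq_eq : q = Real.sqrt q ^ 2 := (Real.sq_sqrt hq.le).symm
  have h1 : -(1 / Real.exp 1) ≤ Real.sqrt q * Real.log (Real.sqrt q) :=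
    neg_inv_e_le_mul_log hs
  have h2 : Real.sqrt q * Real.log (Real.sqrt q) ≤ 0 := by
    have : Real.log (Real.sqrt q) ≤ 0 :=
      Real.log_nonpos (Real.sqrt_nonneg q) (Real.sqrt_le_one.mpr hq1)
    exact mul_nonpos_of_nonneg_of_nonpos hs.le this
  have h3 : (Real.sqrt q * Real.log (Real.sqrt q)) ^ 2 ≤ (1 / Real.exp 1) ^ 2 := by
    nlinarith
  have he : 0 < Real.exp 1 := Real.exp_pos 1
  have hlog : Real.log q = 2 * Real.log (Real.sqrt q) := by
    conv_lhs => rw [hq_eq]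
    rw [Real.log_pow]; push_cast; ring
  have key : q * (Real.log q) ^ 2 = 4 * (Real.sqrt q * Real.log (Real.sqrt q)) ^ 2 := by
    calc q * (Real.log q) ^ 2 = (Real.sqrt q ^ 2) * (2 * Real.log (Real.sqrt q)) ^ 2 := by
          rw [← hq_eq, ← hlog]
      _ = 4 * (Real.sqrt q * Real.log (Real.sqrt q)) ^ 2 := by ring
  rw [key]
  rw [div_pow, one_pow] at h3
  have h4 : 4 * (Real.sqrt q * Real.log (Real.sqrt q)) ^ 2 ≤ 4 * (1 / Real.exp 1 ^ 2) := by
    linarith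
  linarith [h4, show (4:ℝ) * (1 / Real.exp 1 ^ 2) = 4 / Real.exp 1 ^ 2 by ring]

lemma key_ineq {L q : ℝ} (hL : 0 ≤ L) (hq0 : 0 ≤ q) (hql : Real.log q ≤ L) :
    q * (Real.log q) ^ 2 ≤ L * (q * Real.log q) + L / Real.exp 1 + 4 / Real.exp 1 ^ 2 := by
  have he : 0 < Real.exp 1 := Real.exp_pos 1
  rcases eq_or_lt_of_le hq0 with h0 | hq
  · simp [← h0]
    positivity
  rcases le_or_gt q 1 with h1 | h1
  · have hA := mul_sq_log_le hq h1
    have hB := neg_inv_e_le_mul_log hq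
    have hC : -(L / Real.exp 1) ≤ L * (q * Real.log q) := by
      calc -(L / Real.exp 1) = L * (-(1 / Real.exp 1)) := by ring
        _ ≤ L * (q * Real.log q) := mul_le_mul_of_nonneg_left hB hL
    linarith
  · have hlq : 0 ≤ Real.log q := Real.log_nonneg h1.le
    have h2 : q * (Real.log q) ^ 2 ≤ L * (q * Real.log q) := by
      nlinarith [mul_nonneg (mul_nonneg hq0 hlq) (sub_nonneg.2 hql)]
    have e1 : 0 ≤ L / Real.exp 1 := by positivity
    have e2 : 0 ≤ 4 / Real.exp 1 ^ 2 := by positivity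
    linarith

lemma second_moment {α : Type*} [Fintype α] (p : α → ℝ) (hp0 : ∀ k, 0 ≤ p k)
    (hp1 : ∑ k, p k = 1) (hm : 3 ≤ Fintype.card α) :
    ∑ k, p k * (Real.log (p k)) ^ 2 ≤
      (Real.log (Fintype.card α)) ^ 2 +
        (Real.log (Fintype.card α) / Real.exp 1 + 4 / Real.exp 1 ^ 2) := by
  classical
  set m : ℝ := (Fintype.card α : ℝ) with hm_def
  have hm3 : (3 : ℝ) ≤ m := by rw [hm_def]; exact_mod_cast hm
  have hm0 : (0 : ℝ) < m := by linarith
  set L : ℝ := Real.log m with hL_def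
  have hL : 0 ≤ L := Real.log_nonneg (by linarith)
  set C : ℝ := L / Real.exp 1 + 4 / Real.exp 1 ^ 2 with hC_def
  have hC : 0 ≤ C := by
    have := Real.exp_pos 1
    positivity
  have hpk1 : ∀ k, p k ≤ 1 := by
    intro k
    rw [← hp1]
    exact Finset.single_le_sum (fun i _ => hp0 i) (mem_univ k)
  -- per-term bound
  have hterm : ∀ k ∈ univ, p k * (Real.log (p k)) ^ 2 ≤
      p k * L ^ 2 - L * (p k * Real.log (m * p k)) + C / m := by
    intro k _
    rcases eq_or_lt_of_le (hp0 k) with h0 | hpos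
    · rw [← h0]
      simp
      positivity
    · have hq0 : 0 ≤ m * p k := by positivity
      have hql : Real.log (m * p k) ≤ L := by
        rw [hL_def]
        apply Real.log_le_log (by positivity)
        nlinarith [hpk1 k]
      have hkey := key_ineq hL hq0 hql
      have hlogp : Real.log (p k) = Real.log (m * p k) - L := by
        rw [Real.log_mul hm0.ne' hpos.ne', hL_def]; ring
      have hdiv : p k * (Real.log (m * p k)) ^ 2 ≤ L * (p k * Real.log (m * p k)) + C / m := by
        have h5 : m * (p k * (Real.log (m * p k)) ^ 2) ≤
            m * (L * (p k * Real.log (m * p k)) + C / m) := by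
          have : m * (L * (p k * Real.log (m * p k)) + C / m)
              = L * ((m * p k) * Real.log (m * p k)) + C := by
            field_simp
          rw [this]
          calc m * (p k * (Real.log (m * p k)) ^ 2)
              = (m * p k) * (Real.log (m * p k)) ^ 2 := by ring
            _ ≤ L * ((m * p k) * Real.log (m * p k)) + L / Real.exp 1 + 4 / Real.exp 1 ^ 2 :=
                hkey
            _ = L * ((m * p k) * Real.log (m * p k)) + C := by rw [hC_def]; ring
        exact le_of_mul_le_mul_left h5 hm0
      rw [hlogp]
      nlinarith [hdiv]
  have hsum := Finset.sum_le_sum hterm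
  -- Gibbs: D ≥ 0
  have hD : 0 ≤ ∑ k, p k * Real.log (m * p k) := by
    have hterm2 : ∀ k ∈ univ, p k - 1 / m ≤ p k * Real.log (m * p k) := by
      intro k _
      rcases eq_or_lt_of_le (hp0 k) with h0 | hpos
      · rw [← h0]
        simp
        positivity
      · have h := Real.one_sub_inv_le_log_of_pos (mul_pos hm0 hpos)
        have h2 := mul_le_mul_of_nonneg_left h (hp0 k)
        have : p k * (1 - (m * p k)⁻¹) = p k - 1 / m := by
          field_simp
        linarith [this ▸ h2]
    have := Finset.sum_le_sum hterm2
    have heq : ∑ k : α, (p k - 1 / m) = 0 := by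
      rw [Finset.sum_sub_distrib, hp1, Finset.sum_const, card_univ, nsmul_eq_mul]
      field_simp
      simp [hm_def]
    linarith
  -- assemble
  have hsum_eq : ∑ k, (p k * L ^ 2 - L * (p k * Real.log (m * p k)) + C / m)
      = L ^ 2 - L * (∑ k, p k * Real.log (m * p k)) + C := by
    rw [Finset.sum_add_distrib, Finset.sum_sub_distrib, ← Finset.mul_sum, ← Finset.sum_mul,
      hp1, Finset.sum_const, card_univ, nsmul_eq_mul]
    rw [show (Fintype.card α : ℝ) = m from rfl]
    field_simp
    simp_rw [mul_comm (p _) m]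
  rw [hsum_eq] at hsum
  have : 0 ≤ L * (∑ k, p k * Real.log (m * p k)) := mul_nonneg hL hD
  calc ∑ k, p k * (Real.log (p k)) ^ 2 ≤ L ^ 2 - L * (∑ k, p k * Real.log (m * p k)) + C := hsum
    _ ≤ L ^ 2 + C := by linarith

set_option maxHeartbeats 1600000 in
theorem stmt_16 {𝒦 : ℕ → Type*} [∀ n, Fintype (𝒦 n)]
    (hcard : ∀ n, 3 ≤ Fintype.card (𝒦 n))
    (P : ∀ n, 𝒦 n → ℝ)
    (hP0 : ∀ n k, 0 ≤ P n k) (hP1 : ∀ n, ∑ k, P n k = 1)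
    (H : ℕ → ℝ) (hH : ∀ n, H n = ∑ k, P n k * Real.logb 2 (1 / P n k))
    (c β : ℝ)
    (hc : ∀ n : ℕ, 0 < n → (1 / n : ℝ) * Real.logb 2 (Fintype.card (𝒦 n)) ≤ c)
    (hβ : ∀ n : ℕ, 0 < n →
      |H n / n - (1 / n : ℝ) * Real.logb 2 (Fintype.card (𝒦 n))| ≤ β) :
    ∃ N : ℕ, ∀ n ≥ N, 0 < n →
      ∑ k, P n k * ((1 / n : ℝ) * Real.logb 2 (1 / P n k) - H n / n) ^ 2 ≤
        β + 2 * β * c + β ^ 2 := by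
  classical
  have hl2 : (0:ℝ) < Real.log 2 := Real.log_pos one_lt_two
  have he : (0:ℝ) < Real.exp 1 := Real.exp_pos 1
  have hβ0 : 0 ≤ β := le_trans (abs_nonneg _) (hβ 1 one_pos)
  have hc0 : 0 < c := by
    have h3 : (3:ℝ) ≤ (Fintype.card (𝒦 1) : ℝ) := by exact_mod_cast hcard 1
    have h := hc 1 one_pos
    have hlb : 0 < Real.logb 2 (Fintype.card (𝒦 1)) :=
      Real.logb_pos one_lt_two (by linarith)
    norm_num at h
    linarith
  -- basic facts available for every n
  have hpk1 : ∀ n k, P n k ≤ 1 := by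
    intro n k
    rw [← hP1 n]
    exact Finset.single_le_sum (fun i _ => hP0 n i) (mem_univ k)
  have hH0 : ∀ n, 0 ≤ H n := by
    intro n
    rw [hH n]
    apply Finset.sum_nonneg
    intro k _
    rcases eq_or_lt_of_le (hP0 n k) with h0 | hpos
    · rw [← h0]; simp
    · apply mul_nonneg (hP0 n k)
      apply Real.logb_nonneg one_lt_two
      rw [le_div_iff₀ hpos]
      simpa using hpk1 n k
  rcases eq_or_lt_of_le hβ0 with hb0 | hbpos
  · -- β = 0 : distributions are uniform, variance is 0
    refine ⟨1, fun n _ hn => ?_⟩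
    set m : ℝ := (Fintype.card (𝒦 n) : ℝ) with hm_def
    clear_value m
    have hm3 : (3:ℝ) ≤ m := by rw [hm_def]; exact_mod_cast hcard n
    have hm0 : (0:ℝ) < m := by linarith
    have hn0 : (0:ℝ) < (n:ℝ) := by exact_mod_cast hn
    have hHeq : H n = Real.logb 2 m := by
      have h := hβ n hn
      rw [← hb0] at h
      have h2 : |H n / n - (1/n : ℝ) * Real.logb 2 m| ≤ 0 := by rw [hm_def]; exact h
      have h3 := abs_eq_zero.mp (le_antisymm h2 (abs_nonneg _))
      have h4 := sub_eq_zero.mp h3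
      field_simp at h4
      linarith
    -- entropy in nats equals log m
    have hkey : ∑ k, Real.negMulLog (P n k) = Real.log m := by
      have hterm : ∀ k ∈ univ, Real.negMulLog (P n k)
          = (P n k * Real.logb 2 (1 / P n k)) * Real.log 2 := by
        intro k _
        rw [Real.negMulLog, Real.logb, one_div, Real.log_inv]
        field_simp
      rw [Finset.sum_congr rfl hterm, ← Finset.sum_mul, ← hH n, hHeq, Real.logb,
        div_mul_cancel₀ _ hl2.ne']
    -- Jensen equality ⇒ uniform
    have huni : ∀ k, P n k = m⁻¹ := by
      have h₀ : ∀ i ∈ (univ : Finset (𝒦 n)), 0 < m⁻¹ := fun i _ => inv_pos.mpr hm0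
      have h₁ : ∑ _i : 𝒦 n, (m⁻¹ : ℝ) = 1 := by
        rw [Finset.sum_const, card_univ, nsmul_eq_mul, ← hm_def]
        field_simp
      have hmem : ∀ i ∈ (univ : Finset (𝒦 n)), m * P n i ∈ Set.Ici (0:ℝ) :=
        fun i _ => Set.mem_Ici.mpr (mul_nonneg hm0.le (hP0 n i))
      have h_eq : Real.negMulLog (∑ i, m⁻¹ • (m * P n i))
          ≤ ∑ i, m⁻¹ • Real.negMulLog (m * P n i) := by
        have lhs_eq : (∑ i, m⁻¹ • (m * P n i)) = 1 := by
          simp only [smul_eq_mul]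
          rw [Finset.sum_congr rfl
            (fun i _ => show m⁻¹ * (m * P n i) = P n i by field_simp)]
          exact hP1 n
        have rhs_eq : ∑ i, m⁻¹ • Real.negMulLog (m * P n i) = 0 := by
          simp only [smul_eq_mul]
          have hterm3 : ∀ i ∈ (univ : Finset (𝒦 n)), m⁻¹ * Real.negMulLog (m * P n i)
              = (m⁻¹ * Real.negMulLog m) * P n i + Real.negMulLog (P n i) := by
            intro i _
            rw [Real.negMulLog_mul]
            field_simp
          rw [Finset.sum_congr rfl hterm3, Finset.sum_add_distrib, ← Finset.mul_sum,
            hP1 n, hkey, Real.negMulLog]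
          field_simp
          ring
        rw [lhs_eq, rhs_eq]
        simp
      have hj := Real.strictConcaveOn_negMulLog.eq_of_map_sum_eq h₀ h₁ hmem h_eq
      intro k
      have hconst : ∀ j, P n j = P n k := by
        intro j
        have := hj (mem_univ j) (mem_univ k)
        exact mul_left_cancel₀ hm0.ne' this
      have hsum : ∑ j, P n j = (Fintype.card (𝒦 n)) * P n k := by
        rw [Finset.sum_congr rfl (fun j _ => hconst j), Finset.sum_const, card_univ,
          nsmul_eq_mul]
      rw [hP1 n, ← hm_def] at hsum
      field_simp [hm0.ne']
      linarith [hsum]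
    have hzero : ∑ k, P n k * ((1 / n : ℝ) * Real.logb 2 (1 / P n k) - H n / n) ^ 2 = 0 := by
      apply Finset.sum_eq_zero
      intro k _
      rw [huni k, hHeq]
      simp only [one_div, inv_inv]
      have h2 : ((n:ℝ))⁻¹ * Real.logb 2 m - Real.logb 2 m / n = 0 := by ring
      rw [h2]
      simp
    rw [hzero, ← hb0]
    norm_num
  · -- β > 0
    obtain ⟨E, hE⟩ : ∃ E : ℝ, E = Real.exp 1 := ⟨_, rfl⟩
    have hE0 : 0 < E := hE ▸ he
    set A : ℝ := c / (E * Real.log 2) + 4 / (E * Real.log 2)^2 with hA_def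
    clear_value A
    have hA0 : 0 < A := by
      rw [hA_def]
      positivity
    refine ⟨Nat.ceil (A / β), fun n hnN hn => ?_⟩
    have hn0 : (0:ℝ) < (n:ℝ) := by exact_mod_cast hn
    have hn1 : (1:ℝ) ≤ (n:ℝ) := by exact_mod_cast hn
    have hAn : A ≤ n * β := by
      have h1 : A / β ≤ (Nat.ceil (A / β) : ℝ) := Nat.le_ceil _
      have h2 : (Nat.ceil (A / β) : ℝ) ≤ (n:ℝ) := by exact_mod_cast hnN
      rw [div_le_iff₀ hbpos] at h1
      have h5 := mul_le_mul_of_nonneg_right h2 hbpos.le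
      exact h1.trans h5
    set m : ℝ := (Fintype.card (𝒦 n) : ℝ) with hm_def
    have hm3 : (3:ℝ) ≤ m := by rw [hm_def]; exact_mod_cast hcard n
    have hm0 : (0:ℝ) < m := by linarith
    set L : ℝ := Real.log m with hL_def
    clear_value L
    have hL : 0 ≤ L := by rw [hL_def]; exact Real.log_nonneg (by linarith)
    set C : ℝ := L / E + 4 / E ^ 2 with hC_def
    clear_value C
    have hmoment : ∑ k, P n k * (Real.log (P n k)) ^ 2 ≤ L^2 + C := by
      rw [hC_def, hL_def, hm_def, hE]
      exact second_moment (P n) (hP0 n) (hP1 n) (hcard n)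
    -- variance identity
    have hvar : ∑ k, P n k * ((1/n : ℝ) * Real.logb 2 (1 / P n k) - H n / n) ^ 2
        = (1/(n:ℝ))^2 * (∑ k, P n k * (Real.logb 2 (1 / P n k))^2) - (H n / n)^2 := by
      have hsum : ∑ k, P n k * Real.logb 2 (1 / P n k) = H n := (hH n).symm
      have expand : ∀ k ∈ (univ : Finset (𝒦 n)),
          P n k * ((1/n : ℝ) * Real.logb 2 (1 / P n k) - H n / n) ^ 2
          = (1/(n:ℝ))^2 * (P n k * (Real.logb 2 (1 / P n k))^2)
            - (2 * (H n / n) * (1/n)) * (P n k * Real.logb 2 (1 / P n k))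
            + (H n / n)^2 * P n k := fun k _ => by ring
      rw [Finset.sum_congr rfl expand]
      rw [Finset.sum_add_distrib, Finset.sum_sub_distrib, ← Finset.mul_sum, ← Finset.mul_sum,
        ← Finset.mul_sum, hsum, hP1 n]
      field_simp
      ring
    rw [hvar]
    -- convert base-2 second moment to nats
    have hE2 : ∑ k, P n k * (Real.logb 2 (1 / P n k))^2
        ≤ (L^2 + C) / (Real.log 2)^2 := by
      have hterm : ∀ k ∈ (univ : Finset (𝒦 n)),
          P n k * (Real.logb 2 (1 / P n k))^2
          = (P n k * (Real.log (P n k))^2) * (1 / (Real.log 2)^2) := by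
        intro k _
        rw [Real.logb, one_div (P n k), Real.log_inv]
        field_simp
      rw [Finset.sum_congr rfl hterm, ← Finset.sum_mul]
      have hfac : (0:ℝ) ≤ 1 / Real.log 2 ^ 2 := by positivity
      have h := mul_le_mul_of_nonneg_right hmoment hfac
      have heq2 : (L^2 + C) * (1 / Real.log 2 ^ 2) = (L^2 + C) / (Real.log 2)^2 := by ring
      linarith [h]
    have hb := abs_le.mp (hβ n hn)
    have hcn := hc n hn
    rw [← hm_def] at hb hcn
    have hlogb_eq : Real.logb 2 m = L / Real.log 2 := by rw [Real.logb, hL_def]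
    have hs0 : 0 ≤ (1/(n:ℝ)) * Real.logb 2 m := by
      apply mul_nonneg (by positivity)
      apply Real.logb_nonneg one_lt_two (by linarith)
    have hh0 : 0 ≤ H n / n := div_nonneg (hH0 n) hn0.le
    -- key1 : main quadratic bound
    have key1 : (1/(n:ℝ))^2 * ((L / Real.log 2)^2) - (H n / n)^2 ≤ 2*β*c + β^2 := by
      set s : ℝ := (1/(n:ℝ)) * Real.logb 2 m with hs_def
      have hseq : (1/(n:ℝ))^2 * ((L / Real.log 2)^2) = s^2 := by
        rw [hs_def, hlogb_eq]; ring
      rw [hseq]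
      have h1 : s - H n / n ≤ β := by linarith [hb.1]
      have h2 : H n / n ≤ s + β := by linarith [hb.2]
      have h3 : s ≤ c := hcn
      have hsh : s^2 - (H n/n)^2 = (s - H n/n) * (s + H n/n) := by ring
      have e1 : (s - H n/n) * (s + H n/n) ≤ β * (s + H n/n) :=
        mul_le_mul_of_nonneg_right h1 (by linarith)
      have e2 : β * (s + H n/n) ≤ β * (c + (c + β)) := by
        apply mul_le_mul_of_nonneg_left _ hbpos.le
        linarith
      have e3 : β * (c + (c + β)) = 2*β*c + β^2 := by ring
      linarith
    -- key2 : error term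
    have key2 : (1/(n:ℝ))^2 * (C / (Real.log 2)^2) ≤ β := by
      have hLnc : L ≤ (n:ℝ) * c * Real.log 2 := by
        have hmul : Real.logb 2 m ≤ (n:ℝ) * c := by
          have h := mul_le_mul_of_nonneg_left hcn hn0.le
          have heq : (n:ℝ) * (1/(n:ℝ) * Real.logb 2 m) = Real.logb 2 m := by
            field_simp
          rw [heq] at h
          exact h
        have hLeq : L = Real.logb 2 m * Real.log 2 := by
          rw [hlogb_eq]
          field_simp
        rw [hLeq]
        exact mul_le_mul_of_nonneg_right hmul hl2.le
      have lhs_eq : (1/(n:ℝ))^2 * (C / (Real.log 2)^2)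
          = (L * E + 4) / (E^2 * (Real.log 2)^2 * (n:ℝ)^2) := by
        rw [hC_def]
        field_simp
      rw [lhs_eq, div_le_iff₀ (by positivity)]
      have hA_eq : A = (c * E * Real.log 2 + 4) / (E^2 * (Real.log 2)^2) := by
        rw [hA_def]
        field_simp
      have h4 : c * E * Real.log 2 + 4 ≤ (n:ℝ) * β * (E^2 * (Real.log 2)^2) := by
        rw [hA_eq, div_le_iff₀ (by positivity)] at hAn
        linarith
      have m1 : L * E ≤ (n:ℝ)*c*Real.log 2*E :=
        mul_le_mul_of_nonneg_right hLnc hE0.le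
      have m2 : (n:ℝ)*(c*E*Real.log 2 + 4)
          ≤ (n:ℝ)*((n:ℝ)*β*(E^2*(Real.log 2)^2)) :=
        mul_le_mul_of_nonneg_left h4 (by positivity)
      have m3 : (4:ℝ) ≤ 4*(n:ℝ) := by linarith
      nlinarith [m1, m2, m3]
    -- combine
    have hsplit : (1/(n:ℝ))^2 * ((L^2 + C) / (Real.log 2)^2)
        = (1/(n:ℝ))^2 * ((L / Real.log 2)^2) + (1/(n:ℝ))^2 * (C / (Real.log 2)^2) := by
      ring
    have hmono := mul_le_mul_of_nonneg_left hE2 (by positivity : (0:ℝ) ≤ (1/(n:ℝ))^2)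
    linarith [hmono, key1, key2, hsplit]
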